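/- Let f_1, …, f_N : ℝ^n → ℝ be differentiable functions and define Φ(u) = max_{1≤j≤N} f_j(u). Fix u ∈ ℝ^n and suppose d ∈ ℝ^n minimizes over ℝ^n the function ψ(v) = max_{1≤j≤N} { f_j(u) + ⟨∇f_j(u), v⟩ } + (1/2)‖v‖². If d ≠ 0, then there exists t₀ > 0 such that Φ(u + t d) < Φ(u) for all t ∈ (0, t₀). -/

import Mathlib

open Finset
open scoped RealInnerProductSpace

/-- If `d ≠ 0` minimizes `ψ(v) = maxⱼ {fⱼ(u) + ⟨∇fⱼ(u), v⟩} + (1/2)‖v‖²`, then `d` is a descent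
direction for `Φ(u) = maxⱼ fⱼ(u)`: there is `t₀ > 0` with `Φ(u + t d) < Φ(u)` for `t ∈ (0, t₀)`. -/
theorem descent_direction
    (N n : ℕ) [NeZero N] (f : Fin N → EuclideanSpace ℝ (Fin n) → ℝ)
    (hf : ∀ j, Differentiable ℝ (f j))
    (u d : EuclideanSpace ℝ (Fin n))
    (hmin : ∀ v : EuclideanSpace ℝ (Fin n),
      Finset.univ.sup' Finset.univ_nonempty (fun j => f j u + ⟪gradient (f j) u, d⟫) +
          (1 / 2) * ‖d‖ ^ 2 ≤
        Finset.univ.sup' Finset.univ_nonempty (fun j => f j u + ⟪gradient (f j) u, v⟫) +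
          (1 / 2) * ‖v‖ ^ 2)
    (hd : d ≠ 0) :
    ∃ t₀ > (0 : ℝ), ∀ t ∈ Set.Ioo (0 : ℝ) t₀,
      Finset.univ.sup' Finset.univ_nonempty (fun j => f j (u + t • d)) <
        Finset.univ.sup' Finset.univ_nonempty (fun j => f j u) := by
  set Φ : ℝ := Finset.univ.sup' Finset.univ_nonempty (fun j => f j u) with hΦ
  set c : Fin N → ℝ := fun j => ⟪gradient (f j) u, d⟫ with hc
  have hd2 : (0:ℝ) < ‖d‖ ^ 2 := by
    have : ‖d‖ ≠ 0 := norm_ne_zero_iff.mpr hd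
    positivity
  -- key bound from minimality at v = 0
  have key : ∀ j, f j u + c j ≤ Φ - (1/2) * ‖d‖ ^ 2 := by
    intro j
    have h0 := hmin 0
    simp only [inner_zero_right, add_zero, norm_zero] at h0
    have h1 := Finset.le_sup' (fun j => f j u + c j) (Finset.mem_univ j)
    simp only [hc] at h1 h0
    nlinarith [h1, h0]
  have ev : ∀ j : Fin N, ∀ᶠ t in nhdsWithin (0:ℝ) (Set.Ioi 0),
      f j (u + t • d) < Φ := by
    intro j
    have h1 : HasDerivAt (fun t : ℝ => u + t • d) d 0 := by
      simpa using ((hasDerivAt_id (0:ℝ)).smul_const d).const_add u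
    have h2 : HasFDerivAt (f j)
        (InnerProductSpace.toDual ℝ _ (gradient (f j) u)) (u + (0:ℝ) • d) := by
      have := ((hf j).differentiableAt (x := u)).hasGradientAt.hasFDerivAt
      simpa using this
    have hder : HasDerivAt (fun t : ℝ => f j (u + t • d)) (c j) 0 := by
      have := h2.comp_hasDerivAt 0 h1
      exact this
    have hslope := hasDerivAt_iff_tendsto_slope.mp hder
    have hslope' : Filter.Tendsto (slope (fun t : ℝ => f j (u + t • d)) 0)
        (nhdsWithin 0 (Set.Ioi 0)) (nhds (c j)) :=
      hslope.mono_left (nhdsWithin_mono _ (fun x hx => ne_of_gt hx))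
    have hev1 : ∀ᶠ t in nhdsWithin (0:ℝ) (Set.Ioi 0),
        slope (fun t : ℝ => f j (u + t • d)) 0 t < c j + ‖d‖ ^ 2 / 4 := by
      apply hslope'.eventually_lt_const
      linarith
    have hev2 : ∀ᶠ t in nhdsWithin (0:ℝ) (Set.Ioi 0), t < 1 :=
      ((eventually_lt_nhds (by norm_num : (0:ℝ) < 1)).filter_mono nhdsWithin_le_nhds)
    have hev3 : ∀ᶠ t in nhdsWithin (0:ℝ) (Set.Ioi 0), t ∈ Set.Ioi (0:ℝ) :=
      self_mem_nhdsWithin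
    filter_upwards [hev1, hev2, hev3] with t h1t h2t h3t
    have ht : (0:ℝ) < t := h3t
    have hfu : f j u ≤ Φ := Finset.le_sup' (fun j => f j u) (Finset.mem_univ j)
    have hsl : t⁻¹ * (f j (u + t • d) - f j u) < c j + ‖d‖ ^ 2 / 4 := by
      simpa [slope_def_field, slope, vsub_eq_sub] using h1t
    have hlt : f j (u + t • d) - f j u < t * (c j + ‖d‖ ^ 2 / 4) := by
      have h := mul_lt_mul_of_pos_left hsl ht
      rwa [mul_inv_cancel_left₀ (ne_of_gt ht)] at h
    nlinarith [key j, hlt, hfu, mul_pos ht hd2]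
  have evAll : ∀ᶠ t in nhdsWithin (0:ℝ) (Set.Ioi 0),
      Finset.univ.sup' Finset.univ_nonempty (fun j => f j (u + t • d)) < Φ := by
    have := Filter.eventually_all.mpr ev
    filter_upwards [this] with t ht
    exact (Finset.sup'_lt_iff Finset.univ_nonempty).mpr fun j _ => ht j
  rcases mem_nhdsGT_iff_exists_Ioo_subset.mp evAll with ⟨t₀, ht₀, hsub⟩
  exact ⟨t₀, ht₀, fun t ht => hsub ht⟩
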